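/- Let A be an n×n real symmetric matrix with nonnegative entries, no row zero, and consider the ODE q' = 2qAq on nonnegative matrices. Define E_δ = {q : q_ii > δ for all i}, E_cs = {q : the solution ψ(q,t) satisfies ψ(q,t)_{ij}² ≤ ψ(q,t)_{ii} ψ(q,t)_{jj} for all i,j and all t before blow-up}, and J_ε = {q : the blow-up time ζ(q) ≥ ε}. Then for all ε, δ > 0, the set J_ε ∩ E_δ ∩ E_cs is bounded; explicitly every q in this set satisfies max_{ij} q_{ij} ≤ (a⋆² ε² δ)⁻¹ where a⋆ is the smallest positive entry of A. -/

import Mathlib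

open Set

private lemma lin_bound {a K e : ℝ} (ha : 0 ≤ a) (he : 0 < e)
    (h : ∀ t : ℝ, 0 < t → t < e → a * t ≤ K) : a * e ≤ K := by
  rcases ha.eq_or_lt with rfl | ha'
  · have := h (e / 2) (by linarith) (by linarith)
    linarith
  · by_contra hcon
    push_neg at hcon
    have hK : 0 ≤ K := le_trans (by positivity) (h (e / 2) (by linarith) (by linarith))
    have hKa : K / a < e := (div_lt_iff₀ ha').2 (by linarith)
    have hKa0 : 0 ≤ K / a := div_nonneg hK ha'.le
    have h3 := h ((K / a + e) / 2) (by linarith) (by linarith)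
    have h4 : a * ((K / a + e) / 2) = (K + a * e) / 2 := by
      field_simp
    linarith

private lemma mono_aux {F F' : ℝ → ℝ} {T : ℝ}
    (hcont : ContinuousOn F (Icc 0 T))
    (hderiv : ∀ t ∈ Ioo (0:ℝ) T, HasDerivAt F (F' t) t)
    (hpos : ∀ t ∈ Ioo (0:ℝ) T, 0 ≤ F' t) :
    ∀ t ∈ Icc (0:ℝ) T, F 0 ≤ F t := by
  intro t ht
  have hmono : MonotoneOn F (Icc 0 T) := by
    apply monotoneOn_of_deriv_nonneg (convex_Icc 0 T) hcont
    · intro x hx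
      rw [interior_Icc] at hx
      exact (hderiv x hx).differentiableAt.differentiableWithinAt
    · intro x hx
      rw [interior_Icc] at hx
      rw [(hderiv x hx).deriv]
      exact hpos x hx
  exact hmono (left_mem_Icc.2 (ht.1.trans ht.2)) ht ht.1

private lemma mulmul_nonneg {n : ℕ} (A B : Matrix (Fin n) (Fin n) ℝ)
    (hA : ∀ k l, 0 ≤ A k l) (hB : ∀ k l, 0 ≤ B k l) (k l : Fin n) :
    0 ≤ (B * A * B) k l := by
  rw [Matrix.mul_apply]
  refine Finset.sum_nonneg fun x _ => mul_nonneg ?_ (hB x l)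
  rw [Matrix.mul_apply]
  exact Finset.sum_nonneg fun y _ => mul_nonneg (hB k y) (hA y x)

private lemma extract_one {n : ℕ} (A B : Matrix (Fin n) (Fin n) ℝ)
    (hA : ∀ k l, 0 ≤ A k l) (hB : ∀ k l, 0 ≤ B k l) (k l p m : Fin n) :
    B k p * A p m * B m l ≤ (B * A * B) k l := by
  have h0 : ∀ x, 0 ≤ (B * A) k x := fun x => by
    rw [Matrix.mul_apply]
    exact Finset.sum_nonneg fun y _ => mul_nonneg (hB k y) (hA y x)
  have h1 : B k p * A p m ≤ (B * A) k m := by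
    rw [Matrix.mul_apply]
    exact Finset.single_le_sum (fun x _ => mul_nonneg (hB k x) (hA x m)) (Finset.mem_univ p)
  calc B k p * A p m * B m l ≤ (B * A) k m * B m l :=
        mul_le_mul_of_nonneg_right h1 (hB m l)
    _ ≤ (B * A * B) k l := by
        rw [Matrix.mul_apply]
        exact Finset.single_le_sum (fun x _ => mul_nonneg (h0 x) (hB x l)) (Finset.mem_univ m)

private lemma extract_two {n : ℕ} (A B : Matrix (Fin n) (Fin n) ℝ)
    (hA : ∀ k l, 0 ≤ A k l) (hB : ∀ k l, 0 ≤ B k l) {i j : Fin n} (hij : i ≠ j) :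
    B i j * A j i * B i i + B i i * A i j * B j i ≤ (B * A * B) i i := by
  have hc : ∀ x, 0 ≤ (B * A) i x * B x i := fun x => by
    refine mul_nonneg ?_ (hB x i)
    rw [Matrix.mul_apply]
    exact Finset.sum_nonneg fun y _ => mul_nonneg (hB i y) (hA y x)
  have h1 : B i j * A j i * B i i ≤ (B * A) i i * B i i := by
    refine mul_le_mul_of_nonneg_right ?_ (hB i i)
    rw [Matrix.mul_apply]
    exact Finset.single_le_sum (fun x _ => mul_nonneg (hB i x) (hA x i)) (Finset.mem_univ j)
  have h2 : B i i * A i j * B j i ≤ (B * A) i j * B j i := by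
    refine mul_le_mul_of_nonneg_right ?_ (hB j i)
    rw [Matrix.mul_apply]
    exact Finset.single_le_sum (fun x _ => mul_nonneg (hB i x) (hA x j)) (Finset.mem_univ i)
  have h3 : (B * A) i i * B i i + (B * A) i j * B j i ≤ (B * A * B) i i := by
    rw [Matrix.mul_apply]
    have h4 := Finset.sum_le_sum_of_subset_of_nonneg
      (Finset.subset_univ ({i, j} : Finset (Fin n))) (fun x _ _ => hc x)
    rwa [Finset.sum_pair hij] at h4
  linarith

/-- Core Riccati-type estimate: if on `[0,T]` we have `f(0)=b>0`, `G(0) ≥ 0`,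
`f' ≥ 2αGf`, `G' ≥ 4αdf`, `f ≥ 0`, `G ≥ 0`, then `√(4α²db)·T ≤ π/2`. -/
private lemma core {f G : ℝ → ℝ} {α d b T : ℝ}
    (hα : 0 < α) (hd : 0 < d) (hb : 0 < b) (hT : 0 < T)
    (hf0 : f 0 = b) (hG0 : 0 ≤ G 0)
    (hfc : ContinuousOn f (Icc 0 T)) (hGc : ContinuousOn G (Icc 0 T))
    {f' G' : ℝ → ℝ}
    (hfd : ∀ t ∈ Ioo (0:ℝ) T, HasDerivAt f (f' t) t)
    (hGd : ∀ t ∈ Ioo (0:ℝ) T, HasDerivAt G (G' t) t)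
    (hmeas : ∀ t ∈ Ioo (0:ℝ) T, StronglyMeasurableAtFilter f (nhds t))
    (hfnn : ∀ t ∈ Icc (0:ℝ) T, 0 ≤ f t)
    (hGnn : ∀ t ∈ Icc (0:ℝ) T, 0 ≤ G t)
    (hf' : ∀ t ∈ Ioo (0:ℝ) T, 2 * α * (G t) * (f t) ≤ f' t)
    (hG' : ∀ t ∈ Ioo (0:ℝ) T, 4 * α * d * (f t) ≤ G' t) :
    Real.sqrt ((4 * α ^ 2 * d) * b) * T ≤ Real.pi / 2 := by
  set c : ℝ := 4 * α ^ 2 * d with hcdef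
  have hcpos : 0 < c := by rw [hcdef]; positivity
  set u : ℝ → ℝ := fun t => ∫ s in (0:ℝ)..t, f s with hudef
  have hu0 : u 0 = 0 := intervalIntegral.integral_same
  have huC : ContinuousOn u (Icc 0 T) := by
    have h1 : IntervalIntegrable f MeasureTheory.volume 0 T := by
      apply ContinuousOn.intervalIntegrable
      rwa [uIcc_of_le hT.le]
    have h2 := intervalIntegral.continuousOn_primitive_interval'
      (μ := MeasureTheory.volume) h1 (left_mem_uIcc (a := (0:ℝ)) (b := T))
    rwa [uIcc_of_le hT.le] at h2
  have huD : ∀ t ∈ Ioo (0:ℝ) T, HasDerivAt u (f t) t := by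
    intro t ht
    refine intervalIntegral.integral_hasDerivAt_right ?_ (hmeas t ht) ?_
    · apply ContinuousOn.intervalIntegrable
      rw [uIcc_of_le ht.1.le]
      exact hfc.mono (Icc_subset_Icc_right ht.2.le)
    · exact (hfd t ht).continuousAt
  have huNN : ∀ t ∈ Icc (0:ℝ) T, 0 ≤ u t := fun t ht =>
    intervalIntegral.integral_nonneg ht.1 (fun s hs => hfnn s (Icc_subset_Icc_right ht.2 hs))
  -- Step 1: G t ≥ 4 α d u t
  have hG : ∀ t ∈ Icc (0:ℝ) T, 4 * α * d * u t ≤ G t := by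
    have hWc : ContinuousOn (fun t => G t - 4 * α * d * u t) (Icc 0 T) :=
      hGc.sub (continuousOn_const.mul huC)
    have hWd : ∀ t ∈ Ioo (0:ℝ) T,
        HasDerivAt (fun t => G t - 4 * α * d * u t) (G' t - 4 * α * d * f t) t := by
      intro t ht
      exact (hGd t ht).sub ((huD t ht).const_mul _)
    have hWpos : ∀ t ∈ Ioo (0:ℝ) T, 0 ≤ G' t - 4 * α * d * f t := by
      intro t ht
      have := hG' t ht
      linarith
    intro t ht
    have h5 := mono_aux hWc hWd hWpos t ht
    simp only [hu0, mul_zero, sub_zero] at h5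
    linarith [hG0]
  -- Step 2: f t ≥ b + c * (u t)^2
  have hV : ∀ t ∈ Icc (0:ℝ) T, b + c * (u t) ^ 2 ≤ f t := by
    have hVc : ContinuousOn (fun t => f t - c * (u t) ^ 2) (Icc 0 T) :=
      hfc.sub (continuousOn_const.mul (huC.pow 2))
    have hVd : ∀ t ∈ Ioo (0:ℝ) T,
        HasDerivAt (fun t => f t - c * (u t) ^ 2) (f' t - c * (2 * u t * f t)) t := by
      intro t ht
      have h2 : HasDerivAt (fun t => (u t) ^ 2) (2 * u t * f t) t := by
        have h3 := (huD t ht).pow 2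
        simpa using! h3
      exact (hfd t ht).sub (h2.const_mul c)
    have hVpos : ∀ t ∈ Ioo (0:ℝ) T, 0 ≤ f' t - c * (2 * u t * f t) := by
      intro t ht
      have htI := Ioo_subset_Icc_self ht
      have s0 := hf' t ht
      have s1 : α * (4 * α * d * u t) * f t ≤ α * G t * f t := by
        have := hG t htI
        have h6 : α * (4 * α * d * u t) ≤ α * G t :=
          mul_le_mul_of_nonneg_left this hα.le
        exact mul_le_mul_of_nonneg_right h6 (hfnn t htI)
      rw [hcdef]
      nlinarith [s0, s1]
    intro t ht
    have h5 := mono_aux hVc hVd hVpos t ht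
    simp only [hu0, hf0] at h5
    nlinarith [h5]
  -- Step 3: arctan comparison
  set k : ℝ := Real.sqrt (c / b) with hkdef
  set m : ℝ := Real.sqrt (c * b) with hmdef
  have hk0 : 0 ≤ k := Real.sqrt_nonneg _
  have hm0 : 0 ≤ m := Real.sqrt_nonneg _
  have hk2 : k ^ 2 * b = c := by
    rw [hkdef, Real.sq_sqrt (by positivity)]
    field_simp
  have hkm : m = k * b := by
    rw [hmdef, hkdef, show c * b = (c / b) * b ^ 2 by field_simp,
      Real.sqrt_mul (by positivity), Real.sqrt_sq hb.le]
  have hΦc : ContinuousOn (fun t => Real.arctan (k * u t) - m * t) (Icc 0 T) := by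
    apply ContinuousOn.sub
    · exact Real.continuous_arctan.comp_continuousOn (continuousOn_const.mul huC)
    · exact (continuous_const.mul continuous_id).continuousOn
  have hΦd : ∀ t ∈ Ioo (0:ℝ) T, HasDerivAt (fun t => Real.arctan (k * u t) - m * t)
      (1 / (1 + (k * u t) ^ 2) * (k * f t) - m) t := by
    intro t ht
    have h1 : HasDerivAt (fun t => k * u t) (k * f t) t := (huD t ht).const_mul k
    have h2 := h1.arctan
    have h3 := h2.sub ((hasDerivAt_id t).const_mul m)
    simpa using! h3
  have hΦpos : ∀ t ∈ Ioo (0:ℝ) T, 0 ≤ 1 / (1 + (k * u t) ^ 2) * (k * f t) - m := by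
    intro t ht
    have htI := Ioo_subset_Icc_self ht
    have hVt := hV t htI
    have hden : (0:ℝ) < 1 + (k * u t) ^ 2 := by positivity
    rw [sub_nonneg, one_div, inv_mul_eq_div, le_div_iff₀ hden]
    have hexp : m * (1 + (k * u t) ^ 2) = k * (b + c * (u t) ^ 2) := by
      linear_combination (1 + (k * u t) ^ 2) * hkm + k * (u t) ^ 2 * hk2
    rw [hexp]
    exact mul_le_mul_of_nonneg_left hVt hk0
  have hfin := mono_aux hΦc hΦd hΦpos T (right_mem_Icc.2 hT.le)
  simp only [hu0, mul_zero, Real.arctan_zero, sub_zero, zero_sub] at hfin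
  have harc := Real.arctan_lt_pi_div_two (k * u T)
  have : m * T ≤ Real.pi / 2 := by linarith
  rwa [hmdef] at this

theorem stmt1 {n : ℕ} (A : Matrix (Fin n) (Fin n) ℝ)
    (hAsymm : A.IsSymm) (hAnonneg : ∀ i j, 0 ≤ A i j)
    (hArow : ∀ i, ∃ j, 0 < A i j)
    (astar : ℝ)
    (hastar_le : ∀ i j, 0 < A i j → astar ≤ A i j)
    (hastar_mem : ∃ i j, 0 < A i j ∧ A i j = astar)
    (ψ : Matrix (Fin n) (Fin n) ℝ → ℝ → Matrix (Fin n) (Fin n) ℝ)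
    (ζ : Matrix (Fin n) (Fin n) ℝ → ℝ)
    (hflow0 : ∀ q, ψ q 0 = q)
    (hflow_nonneg : ∀ q, ∀ t ∈ Ico (0:ℝ) (ζ q), ∀ k l, 0 ≤ ψ q t k l)
    (hflow_ode : ∀ q, ∀ t ∈ Ico (0:ℝ) (ζ q), ∀ k l,
      HasDerivAt (fun s => ψ q s k l) (2 * ((ψ q t * A * ψ q t) k l)) t)
    (ε δ : ℝ) (hε : 0 < ε) (hδ : 0 < δ)
    (q : Matrix (Fin n) (Fin n) ℝ)
    (hq_nonneg : ∀ k l, 0 ≤ q k l)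
    (hJ : ε ≤ ζ q)
    (hEδ : ∀ i, δ < q i i)
    (hEcs : ∀ t ∈ Ico (0:ℝ) (ζ q), ∀ i j, (ψ q t i j)^2 ≤ ψ q t i i * ψ q t j j) :
    ∀ i j, q i j ≤ (astar^2 * ε^2 * δ)⁻¹ := by
  have hα : 0 < astar := by
    obtain ⟨a, b, hpos, heq⟩ := hastar_mem
    exact heq ▸ hpos
  have hζ : 0 < ζ q := lt_of_lt_of_le hε hJ
  have hMpos : (0:ℝ) < (astar^2 * ε^2 * δ)⁻¹ := by positivity
  have diag : ∀ i, q i i ≤ (astar^2 * ε^2 * δ)⁻¹ := by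
    intro i
    obtain ⟨j, hAij⟩ := hArow i
    have hαA : astar ≤ A i j := hastar_le i j hAij
    have hb : 0 < q i i := hδ.trans (hEδ i)
    have hAs : A j i = A i j := hAsymm.apply i j
    by_cases hij : j = i
    · -- diagonal case : A i i > 0
      subst hij
      have key : ∀ T : ℝ, 0 < T → T < ε → (2 * astar) * T ≤ (q j j)⁻¹ := by
        intro T hT0 hTε
        have hsub : Icc (0:ℝ) T ⊆ Ico 0 (ζ q) :=
          fun t ht => ⟨ht.1, lt_of_le_of_lt ht.2 (hTε.trans_le hJ)⟩
        have hD : ∀ t ∈ Icc (0:ℝ) T,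
            HasDerivAt (fun s => ψ q s j j) (2 * ((ψ q t * A * ψ q t) j j)) t :=
          fun t ht => hflow_ode q t (hsub ht) j j
        have hNN : ∀ t ∈ Icc (0:ℝ) T, ∀ k l, 0 ≤ ψ q t k l :=
          fun t ht => hflow_nonneg q t (hsub ht)
        have hC : ContinuousOn (fun s => ψ q s j j) (Icc 0 T) :=
          fun t ht => ((hD t ht).continuousAt).continuousWithinAt
        have hfmono := mono_aux hC (fun t ht => hD t (Ioo_subset_Icc_self ht))
          (fun t ht => by
            have := mulmul_nonneg A (ψ q t) hAnonneg (hNN t (Ioo_subset_Icc_self ht)) j j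
            linarith)
        have hfpos : ∀ t ∈ Icc (0:ℝ) T, q j j ≤ ψ q t j j := by
          intro t ht
          have h1 := hfmono t ht
          rwa [show ψ q 0 j j = q j j from by rw [hflow0]] at h1
        have hFc : ContinuousOn (fun t => -(ψ q t j j)⁻¹ - 2 * astar * t) (Icc 0 T) := by
          apply ContinuousOn.sub
          · exact (hC.inv₀ (fun t ht => (hb.trans_le (hfpos t ht)).ne')).neg
          · exact (continuous_const.mul continuous_id).continuousOn
        have hFd : ∀ t ∈ Ioo (0:ℝ) T, HasDerivAt (fun t => -(ψ q t j j)⁻¹ - 2 * astar * t)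
            (2 * ((ψ q t * A * ψ q t) j j) / (ψ q t j j) ^ 2 - 2 * astar) t := by
          intro t ht
          have h1 := ((hD t (Ioo_subset_Icc_self ht)).inv
            (hb.trans_le (hfpos t (Ioo_subset_Icc_self ht))).ne').neg
          have h2 := h1.sub ((hasDerivAt_id t).const_mul (2 * astar))
          exact h2.congr_deriv (by ring)
        have hFpos : ∀ t ∈ Ioo (0:ℝ) T,
            0 ≤ 2 * ((ψ q t * A * ψ q t) j j) / (ψ q t j j) ^ 2 - 2 * astar := by
          intro t ht
          have htI := Ioo_subset_Icc_self ht
          have hext := extract_one A (ψ q t) hAnonneg (hNN t htI) j j j j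
          have hfp : 0 < ψ q t j j := hb.trans_le (hfpos t htI)
          rw [sub_nonneg, le_div_iff₀ (by positivity)]
          nlinarith [hext, hαA, hfp]
        have hfin := mono_aux hFc hFd hFpos T (right_mem_Icc.2 hT0.le)
        simp only [mul_zero, sub_zero, show ψ q 0 j j = q j j from by rw [hflow0]] at hfin
        have hinv : 0 ≤ (ψ q T j j)⁻¹ :=
          inv_nonneg.2 (le_trans hb.le (hfpos T (right_mem_Icc.2 hT0.le)))
        linarith
      have hfin := lin_bound (by positivity) hε key
      have h2 : 2 * astar * ε * q j j ≤ 1 := by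
        have h3 := mul_le_mul_of_nonneg_right hfin hb.le
        rwa [inv_mul_cancel₀ hb.ne'] at h3
      rw [← one_div, le_div_iff₀ (show (0:ℝ) < astar^2 * ε^2 * δ by positivity)]
      have p1 : 0 ≤ (q j j - δ) * (astar^2 * ε^2 * q j j) :=
        mul_nonneg (by linarith [hEδ j]) (by positivity)
      have h3 : astar * ε * q j j ≤ 1/2 := by linarith
      have h4 : 0 ≤ astar * ε * q j j := by positivity
      nlinarith [p1, h3, h4]
    · -- off-diagonal case : i ≠ j
      have hij' : i ≠ j := fun h => hij h.symm
      have key : ∀ T : ℝ, 0 < T → T < ε →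
          Real.sqrt ((4 * astar ^ 2 * δ) * q i i) * T ≤ Real.pi / 2 := by
        intro T hT0 hTε
        have hsub : Icc (0:ℝ) T ⊆ Ico 0 (ζ q) :=
          fun t ht => ⟨ht.1, lt_of_le_of_lt ht.2 (hTε.trans_le hJ)⟩
        have hD : ∀ (k l : Fin n), ∀ t ∈ Icc (0:ℝ) T,
            HasDerivAt (fun s => ψ q s k l) (2 * ((ψ q t * A * ψ q t) k l)) t :=
          fun k l t ht => hflow_ode q t (hsub ht) k l
        have hNN : ∀ t ∈ Icc (0:ℝ) T, ∀ k l, 0 ≤ ψ q t k l :=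
          fun t ht => hflow_nonneg q t (hsub ht)
        have hC : ∀ k l : Fin n, ContinuousOn (fun s => ψ q s k l) (Icc 0 T) :=
          fun k l t ht => ((hD k l t ht).continuousAt).continuousWithinAt
        -- ψ j j stays ≥ δ
        have hjj : ∀ t ∈ Icc (0:ℝ) T, δ ≤ ψ q t j j := by
          have hm2 := mono_aux (hC j j) (fun t ht => hD j j t (Ioo_subset_Icc_self ht))
            (fun t ht => by
              have := mulmul_nonneg A (ψ q t) hAnonneg (hNN t (Ioo_subset_Icc_self ht)) j j
              linarith)
          intro t ht
          have h1 := hm2 t ht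
          rw [show ψ q 0 j j = q j j from by rw [hflow0]] at h1
          linarith [hEδ j]
        -- apply core
        have hmeas : ∀ t ∈ Ioo (0:ℝ) T,
            StronglyMeasurableAtFilter (fun s => ψ q s i i) (nhds t) := by
          have hopen : ContinuousOn (fun s => ψ q s i i) (Ioo 0 (ζ q)) := fun s hs =>
            ((hflow_ode q s ⟨hs.1.le, hs.2⟩ i i).continuousAt).continuousWithinAt
          intro t ht
          exact hopen.stronglyMeasurableAtFilter isOpen_Ioo t
            ⟨ht.1, lt_trans ht.2 (lt_of_lt_of_le hTε hJ)⟩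
        have hcore := core (f := fun s => ψ q s i i)
          (G := fun s => ψ q s i j + ψ q s j i)
          (f' := fun t => 2 * ((ψ q t * A * ψ q t) i i))
          (G' := fun t => 2 * ((ψ q t * A * ψ q t) i j) + 2 * ((ψ q t * A * ψ q t) j i))
          hα hδ hb hT0
          (by show ψ q 0 i i = q i i; rw [hflow0])
          (by show (0:ℝ) ≤ ψ q 0 i j + ψ q 0 j i
              rw [hflow0]; exact add_nonneg (hq_nonneg i j) (hq_nonneg j i))
          (hC i i) ((hC i j).add (hC j i))
          (fun t ht => hD i i t (Ioo_subset_Icc_self ht))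
          (fun t ht => (hD i j t (Ioo_subset_Icc_self ht)).add (hD j i t (Ioo_subset_Icc_self ht)))
          hmeas
          (fun t ht => hNN t ht i i)
          (fun t ht => add_nonneg (hNN t ht i j) (hNN t ht j i))
          ?_ ?_
        · exact hcore
        · -- f' ≥ 2 α G f
          intro t ht
          show 2 * astar * (ψ q t i j + ψ q t j i) * ψ q t i i ≤ 2 * ((ψ q t * A * ψ q t) i i)
          have htI := Ioo_subset_Icc_self ht
          have hB := hNN t htI
          have e3 := extract_two A (ψ q t) hAnonneg hB hij'
          rw [hAs] at e3
          have s1 : astar * ((ψ q t i j + ψ q t j i) * ψ q t i i) ≤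
              A i j * ((ψ q t i j + ψ q t j i) * ψ q t i i) :=
            mul_le_mul_of_nonneg_right hαA
              (mul_nonneg (add_nonneg (hB i j) (hB j i)) (hB i i))
          nlinarith [e3, s1]
        · -- G' ≥ 4 α δ f
          intro t ht
          show 4 * astar * δ * ψ q t i i ≤
            2 * ((ψ q t * A * ψ q t) i j) + 2 * ((ψ q t * A * ψ q t) j i)
          have htI := Ioo_subset_Icc_self ht
          have hB := hNN t htI
          have e1 := extract_one A (ψ q t) hAnonneg hB i j i j
          have e2 := extract_one A (ψ q t) hAnonneg hB j i j i
          rw [hAs] at e2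
          have hδjj := hjj t htI
          have t1 : 0 ≤ (A i j * ψ q t j j - astar * δ) * ψ q t i i := by
            have h7 : astar * δ ≤ A i j * ψ q t j j :=
              mul_le_mul hαA hδjj hδ.le (le_trans hα.le hαA)
            exact mul_nonneg (by linarith) (hB i i)
          nlinarith [e1, e2, t1]
      have hm0 : 0 ≤ Real.sqrt ((4 * astar ^ 2 * δ) * q i i) := Real.sqrt_nonneg _
      have hfin := lin_bound hm0 hε key
      have hsq : (Real.sqrt ((4 * astar ^ 2 * δ) * q i i) * ε) ^ 2 ≤ (Real.pi / 2) ^ 2 :=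
        pow_le_pow_left₀ (mul_nonneg hm0 hε.le) hfin 2
      have hm2 : (Real.sqrt ((4 * astar ^ 2 * δ) * q i i)) ^ 2 = (4 * astar ^ 2 * δ) * q i i :=
        Real.sq_sqrt (by positivity)
      rw [← one_div, le_div_iff₀ (show (0:ℝ) < astar^2 * ε^2 * δ by positivity)]
      nlinarith [hsq, hm2, Real.pi_le_four, Real.pi_pos]
  intro i j
  have hcs := hEcs 0 ⟨le_refl 0, hζ⟩ i j
  rw [hflow0] at hcs
  have hMM : q i i * q j j ≤ (astar^2 * ε^2 * δ)⁻¹ * (astar^2 * ε^2 * δ)⁻¹ :=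
    mul_le_mul (diag i) (diag j) (hδ.trans (hEδ j)).le hMpos.le
  nlinarith [hcs, hMM, hq_nonneg i j, hMpos]
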